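/- Let (G, Δ, ε, φ, S, α, β) be a quasi-Hopf algebra, h := (S⁻¹ ⊗ S⁻¹)(f²¹) the Drinfeld-type twist satisfying hΔ(a)h⁻¹ = (S⁻¹ ⊗ S⁻¹)(Δ^op(S(a))) and φ_h = (S⁻¹ ⊗ S⁻¹ ⊗ S⁻¹)(φ³²¹). Define Δ_L(a) := hΔ(a) and Δ_R(a) := Δ(a)h⁻¹. Then for all a ∈ G: (id ⊗ Δ_L)(Δ_L(a))·φ = (S⁻¹ ⊗ S⁻¹ ⊗ S⁻¹)(φ³²¹)·(Δ_L ⊗ id)(Δ_L(a)), and φ·(Δ_R ⊗ id)(Δ_R(a)) = (id ⊗ Δ_R)(Δ_R(a))·(S⁻¹ ⊗ S⁻¹ ⊗ S⁻¹)(φ³²¹). -/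

import Mathlib

open TensorProduct

noncomputable section

/-- A quasi-bialgebra structure (Drinfeld) on an algebra `G` over `ℂ`: algebra maps
`Δ : G → G ⊗ G` and `ε : G → ℂ`, together with an invertible reassociator
`φ ∈ G ⊗ G ⊗ G` satisfying quasi-coassociativity, the pentagon identity and the counit
axioms. -/
structure QuasiBialg (G : Type*) [Ring G] [Algebra ℂ G] where
  comul : G →ₐ[ℂ] G ⊗[ℂ] G
  counit : G →ₐ[ℂ] ℂ
  assocEl : G ⊗[ℂ] (G ⊗[ℂ] G)
  assocElInv : G ⊗[ℂ] (G ⊗[ℂ] G)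
  assocEl_mul_inv : assocEl * assocElInv = 1
  assocEl_inv_mul : assocElInv * assocEl = 1
  quasiCoassoc : ∀ a : G,
    TensorProduct.map LinearMap.id comul.toLinearMap (comul a) * assocEl =
      assocEl *
        (TensorProduct.assoc ℂ G G G)
          (TensorProduct.map comul.toLinearMap LinearMap.id (comul a))
  counit_comul_left : ∀ a : G,
    (TensorProduct.lid ℂ G)
      (TensorProduct.map counit.toLinearMap LinearMap.id (comul a)) = a
  counit_comul_right : ∀ a : G,
    (TensorProduct.rid ℂ G)
      (TensorProduct.map LinearMap.id counit.toLinearMap (comul a)) = a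
  counit_assocEl :
    TensorProduct.map LinearMap.id
        ((TensorProduct.lid ℂ G).toLinearMap ∘ₗ
          TensorProduct.map counit.toLinearMap LinearMap.id) assocEl =
      (1 : G ⊗[ℂ] G)
  pentagon :
    TensorProduct.map LinearMap.id
          (TensorProduct.map LinearMap.id comul.toLinearMap) assocEl *
        (TensorProduct.assoc ℂ G G (G ⊗[ℂ] G))
          (TensorProduct.map comul.toLinearMap LinearMap.id assocEl) =
      ((1 : G) ⊗ₜ[ℂ] assocEl) *
        TensorProduct.map LinearMap.id (TensorProduct.assoc ℂ G G G).toLinearMap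
          (TensorProduct.map LinearMap.id
            (TensorProduct.map comul.toLinearMap LinearMap.id) assocEl) *
        TensorProduct.map LinearMap.id (TensorProduct.assoc ℂ G G G).toLinearMap
          ((TensorProduct.assoc ℂ G (G ⊗[ℂ] G) G) (assocEl ⊗ₜ[ℂ] (1 : G)))

/-- A quasi-Hopf algebra structure (Drinfeld) on an algebra `G` over `ℂ`: a quasi-bialgebra
together with an invertible algebra antimorphism `S` and elements `α, β ∈ G` satisfying the
antipode axioms. -/
structure QuasiHopf (G : Type*) [Ring G] [Algebra ℂ G] extends QuasiBialg G where
  S : G →ₗ[ℂ] G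
  S_one : S 1 = 1
  S_mul : ∀ a b : G, S (a * b) = S b * S a
  Sinv : G →ₗ[ℂ] G
  Sinv_S : ∀ a : G, Sinv (S a) = a
  S_Sinv : ∀ a : G, S (Sinv a) = a
  alphaEl : G
  betaEl : G
  antipode_left : ∀ a : G,
    LinearMap.mul' ℂ G
        (TensorProduct.map (LinearMap.mulRight ℂ alphaEl ∘ₗ S) LinearMap.id (comul a)) =
      counit a • alphaEl
  antipode_right : ∀ a : G,
    LinearMap.mul' ℂ G
        (TensorProduct.map (LinearMap.mulRight ℂ betaEl) S (comul a)) =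
      counit a • betaEl
  antipode_assocEl :
    (LinearMap.mul' ℂ G ∘ₗ
        TensorProduct.map (LinearMap.mulRight ℂ betaEl)
          (LinearMap.mul' ℂ G ∘ₗ
            TensorProduct.map (LinearMap.mulRight ℂ alphaEl ∘ₗ S) LinearMap.id))
      assocEl = 1
  antipode_assocElInv :
    (LinearMap.mul' ℂ G ∘ₗ
        TensorProduct.map (LinearMap.mulRight ℂ alphaEl ∘ₗ S)
          (LinearMap.mul' ℂ G ∘ₗ
            TensorProduct.map (LinearMap.mulRight ℂ betaEl) S))
      assocElInv = 1

/-- Reversal of the three tensor factors, `x ⊗ y ⊗ z ↦ z ⊗ y ⊗ x`. -/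
def rev3 (G : Type*) [Ring G] [Algebra ℂ G] :
    G ⊗[ℂ] (G ⊗[ℂ] G) →ₗ[ℂ] G ⊗[ℂ] (G ⊗[ℂ] G) :=
  TensorProduct.map LinearMap.id (TensorProduct.comm ℂ G G).toLinearMap ∘ₗ
    (TensorProduct.assoc ℂ G G G).toLinearMap ∘ₗ
    TensorProduct.map (TensorProduct.comm ℂ G G).toLinearMap LinearMap.id ∘ₗ
    (TensorProduct.assoc ℂ G G G).symm.toLinearMap ∘ₗ
    TensorProduct.map LinearMap.id (TensorProduct.comm ℂ G G).toLinearMap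

section St13Helpers

lemma st13_map_eq {A B C D : Type*} [Ring A] [Ring B] [Ring C] [Ring D]
    [Algebra ℂ A] [Algebra ℂ B] [Algebra ℂ C] [Algebra ℂ D]
    (f : A →ₐ[ℂ] B) (g : C →ₐ[ℂ] D) :
    TensorProduct.map f.toLinearMap g.toLinearMap =
      (Algebra.TensorProduct.map f g).toLinearMap :=
  TensorProduct.ext' fun _ _ => rfl

lemma st13_map_mul {A B C D : Type*} [Ring A] [Ring B] [Ring C] [Ring D]
    [Algebra ℂ A] [Algebra ℂ B] [Algebra ℂ C] [Algebra ℂ D]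
    (f : A →ₐ[ℂ] B) (g : C →ₐ[ℂ] D) (x y : A ⊗[ℂ] C) :
    TensorProduct.map f.toLinearMap g.toLinearMap (x * y) =
      TensorProduct.map f.toLinearMap g.toLinearMap x *
        TensorProduct.map f.toLinearMap g.toLinearMap y := by
  rw [st13_map_eq]; exact map_mul (Algebra.TensorProduct.map f g) x y

lemma st13_map_one {A B C D : Type*} [Ring A] [Ring B] [Ring C] [Ring D]
    [Algebra ℂ A] [Algebra ℂ B] [Algebra ℂ C] [Algebra ℂ D]
    (f : A →ₐ[ℂ] B) (g : C →ₐ[ℂ] D) :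
    TensorProduct.map f.toLinearMap g.toLinearMap (1 : A ⊗[ℂ] C) = 1 := by
  rw [st13_map_eq]; exact map_one (Algebra.TensorProduct.map f g)

end St13Helpers

set_option maxHeartbeats 2000000 in
/-- Let `(G, Δ, ε, φ, S, α, β)` be a quasi-Hopf algebra, and let
`h = (S⁻¹ ⊗ S⁻¹)(f²¹)` be the Drinfeld-type twist satisfying
`hΔ(a)h⁻¹ = (S⁻¹ ⊗ S⁻¹)(Δ^op(S(a)))` and `φ_h = (S⁻¹ ⊗ S⁻¹ ⊗ S⁻¹)(φ³²¹)` (these two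
properties of `h` are taken as assumptions).  Define `Δ_L(a) := hΔ(a)` and
`Δ_R(a) := Δ(a)h⁻¹`.  Then for all `a ∈ G`:
`(id ⊗ Δ_L)(Δ_L(a))·φ = (S⁻¹ ⊗ S⁻¹ ⊗ S⁻¹)(φ³²¹)·(Δ_L ⊗ id)(Δ_L(a))` and
`φ·(Δ_R ⊗ id)(Δ_R(a)) = (id ⊗ Δ_R)(Δ_R(a))·(S⁻¹ ⊗ S⁻¹ ⊗ S⁻¹)(φ³²¹)`. -/

theorem statement13
    (G : Type*) [Ring G] [Algebra ℂ G] (Q : QuasiHopf G)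
    (h hinv : G ⊗[ℂ] G)
    (h_mul_inv : h * hinv = 1) (h_inv_mul : hinv * h = 1)
    (h_intertwine : ∀ a : G,
      h * Q.comul a * hinv =
        TensorProduct.map Q.Sinv Q.Sinv
          ((TensorProduct.comm ℂ G G) (Q.comul (Q.S a))))
    (h_phi :
      ((1 : G) ⊗ₜ[ℂ] h) *
          TensorProduct.map LinearMap.id Q.comul.toLinearMap h * Q.assocEl *
          (TensorProduct.assoc ℂ G G G)
            (TensorProduct.map Q.comul.toLinearMap LinearMap.id hinv) *
          (TensorProduct.assoc ℂ G G G) (hinv ⊗ₜ[ℂ] (1 : G)) =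
        TensorProduct.map Q.Sinv (TensorProduct.map Q.Sinv Q.Sinv) (rev3 G Q.assocEl)) :
    (∀ a : G,
      TensorProduct.map LinearMap.id (LinearMap.mulLeft ℂ h ∘ₗ Q.comul.toLinearMap)
            ((LinearMap.mulLeft ℂ h ∘ₗ Q.comul.toLinearMap) a) * Q.assocEl =
        TensorProduct.map Q.Sinv (TensorProduct.map Q.Sinv Q.Sinv) (rev3 G Q.assocEl) *
          (TensorProduct.assoc ℂ G G G)
            (TensorProduct.map (LinearMap.mulLeft ℂ h ∘ₗ Q.comul.toLinearMap) LinearMap.id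
              ((LinearMap.mulLeft ℂ h ∘ₗ Q.comul.toLinearMap) a))) ∧
    (∀ a : G,
      Q.assocEl *
          (TensorProduct.assoc ℂ G G G)
            (TensorProduct.map (LinearMap.mulRight ℂ hinv ∘ₗ Q.comul.toLinearMap)
              LinearMap.id
              ((LinearMap.mulRight ℂ hinv ∘ₗ Q.comul.toLinearMap) a)) =
        TensorProduct.map LinearMap.id (LinearMap.mulRight ℂ hinv ∘ₗ Q.comul.toLinearMap)
            ((LinearMap.mulRight ℂ hinv ∘ₗ Q.comul.toLinearMap) a) *
          TensorProduct.map Q.Sinv (TensorProduct.map Q.Sinv Q.Sinv) (rev3 G Q.assocEl)) := by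
  classical
  -- notation
  set A : (G ⊗[ℂ] G) ⊗[ℂ] G →ₗ[ℂ] G ⊗[ℂ] (G ⊗[ℂ] G) :=
    (TensorProduct.assoc ℂ G G G).toLinearMap with hAdef
  have idEq : (LinearMap.id : G →ₗ[ℂ] G) = (AlgHom.id ℂ G).toLinearMap := rfl
  -- multiplicativity of the relevant maps
  have mul_idΔ : ∀ x y : G ⊗[ℂ] G,
      TensorProduct.map LinearMap.id Q.comul.toLinearMap (x * y) =
        TensorProduct.map LinearMap.id Q.comul.toLinearMap x *
          TensorProduct.map LinearMap.id Q.comul.toLinearMap y := by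
    intro x y; rw [idEq]; exact st13_map_mul _ _ x y
  have mul_Δid : ∀ x y : G ⊗[ℂ] G,
      TensorProduct.map Q.comul.toLinearMap LinearMap.id (x * y) =
        TensorProduct.map Q.comul.toLinearMap LinearMap.id x *
          TensorProduct.map Q.comul.toLinearMap LinearMap.id y := by
    intro x y; rw [idEq]; exact st13_map_mul _ _ x y
  have one_idΔ : TensorProduct.map LinearMap.id Q.comul.toLinearMap (1 : G ⊗[ℂ] G) = 1 := by
    rw [idEq]; exact st13_map_one _ _
  have one_Δid : TensorProduct.map Q.comul.toLinearMap LinearMap.id (1 : G ⊗[ℂ] G) = 1 := by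
    rw [idEq]; exact st13_map_one _ _
  have Amul : ∀ x y : (G ⊗[ℂ] G) ⊗[ℂ] G,
      (TensorProduct.assoc ℂ G G G) (x * y) =
        (TensorProduct.assoc ℂ G G G) x * (TensorProduct.assoc ℂ G G G) y :=
    fun x y => map_mul (Algebra.TensorProduct.assoc ℂ ℂ ℂ G G G) x y
  have Aone : (TensorProduct.assoc ℂ G G G) (1 : (G ⊗[ℂ] G) ⊗[ℂ] G) = 1 :=
    map_one (Algebra.TensorProduct.assoc ℂ ℂ ℂ G G G)
  -- expansions of the twisted maps
  have L1 : ∀ x : G ⊗[ℂ] G,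
      TensorProduct.map LinearMap.id (LinearMap.mulLeft ℂ h ∘ₗ Q.comul.toLinearMap) x =
        ((1 : G) ⊗ₜ[ℂ] h) * TensorProduct.map LinearMap.id Q.comul.toLinearMap x := by
    intro x
    induction x using TensorProduct.induction_on with
    | zero => simp
    | tmul a b => simp [Algebra.TensorProduct.tmul_mul_tmul]
    | add x y hx hy => simp only [map_add, hx, hy, mul_add]
  have L2 : ∀ x : G ⊗[ℂ] G,
      TensorProduct.map (LinearMap.mulLeft ℂ h ∘ₗ Q.comul.toLinearMap) LinearMap.id x =
        (h ⊗ₜ[ℂ] (1 : G)) * TensorProduct.map Q.comul.toLinearMap LinearMap.id x := by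
    intro x
    induction x using TensorProduct.induction_on with
    | zero => simp
    | tmul a b => simp [Algebra.TensorProduct.tmul_mul_tmul]
    | add x y hx hy => simp only [map_add, hx, hy, mul_add]
  have R1 : ∀ x : G ⊗[ℂ] G,
      TensorProduct.map LinearMap.id (LinearMap.mulRight ℂ hinv ∘ₗ Q.comul.toLinearMap) x =
        TensorProduct.map LinearMap.id Q.comul.toLinearMap x * ((1 : G) ⊗ₜ[ℂ] hinv) := by
    intro x
    induction x using TensorProduct.induction_on with
    | zero => simp
    | tmul a b => simp [Algebra.TensorProduct.tmul_mul_tmul]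
    | add x y hx hy => simp only [map_add, hx, hy, add_mul]
  have R2 : ∀ x : G ⊗[ℂ] G,
      TensorProduct.map (LinearMap.mulRight ℂ hinv ∘ₗ Q.comul.toLinearMap) LinearMap.id x =
        TensorProduct.map Q.comul.toLinearMap LinearMap.id x * (hinv ⊗ₜ[ℂ] (1 : G)) := by
    intro x
    induction x using TensorProduct.induction_on with
    | zero => simp
    | tmul a b => simp [Algebra.TensorProduct.tmul_mul_tmul]
    | add x y hx hy => simp only [map_add, hx, hy, add_mul]
  -- cancellation lemmas
  have c1 : ∀ z : G ⊗[ℂ] (G ⊗[ℂ] G),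
      (TensorProduct.assoc ℂ G G G) (hinv ⊗ₜ[ℂ] (1 : G)) *
        ((TensorProduct.assoc ℂ G G G) (h ⊗ₜ[ℂ] (1 : G)) * z) = z := by
    intro z
    rw [← mul_assoc, ← Amul, Algebra.TensorProduct.tmul_mul_tmul, h_inv_mul, mul_one,
      ← Algebra.TensorProduct.one_def, Aone, one_mul]
  have c2 : ∀ z : G ⊗[ℂ] (G ⊗[ℂ] G),
      (TensorProduct.assoc ℂ G G G)
          (TensorProduct.map Q.comul.toLinearMap LinearMap.id hinv) *
        ((TensorProduct.assoc ℂ G G G)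
            (TensorProduct.map Q.comul.toLinearMap LinearMap.id h) * z) = z := by
    intro z
    rw [← mul_assoc, ← Amul, ← mul_Δid, h_inv_mul, one_Δid, Aone, one_mul]
  have c3 : ∀ z : G ⊗[ℂ] (G ⊗[ℂ] G),
      ((1 : G) ⊗ₜ[ℂ] hinv) * (((1 : G) ⊗ₜ[ℂ] h) * z) = z := by
    intro z
    rw [← mul_assoc, Algebra.TensorProduct.tmul_mul_tmul, h_inv_mul, mul_one,
      ← Algebra.TensorProduct.one_def, one_mul]
  have c4 : ∀ z : G ⊗[ℂ] (G ⊗[ℂ] G),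
      TensorProduct.map LinearMap.id Q.comul.toLinearMap hinv *
        (TensorProduct.map LinearMap.id Q.comul.toLinearMap h * z) = z := by
    intro z
    rw [← mul_assoc, ← mul_idΔ, h_inv_mul, one_idΔ, one_mul]
  constructor
  · intro a
    have hL : (LinearMap.mulLeft ℂ h ∘ₗ Q.comul.toLinearMap) a = h * Q.comul a := rfl
    rw [hL, L1, L2, mul_idΔ, mul_Δid, Amul, Amul, ← h_phi]
    simp only [mul_assoc]
    rw [c1, c2]
    rw [Q.quasiCoassoc a]
  · intro a
    have hR : (LinearMap.mulRight ℂ hinv ∘ₗ Q.comul.toLinearMap) a =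
        Q.comul a * hinv := rfl
    rw [hR, R2, R1, mul_Δid, mul_idΔ, Amul, Amul, ← h_phi]
    simp only [mul_assoc]
    rw [c3, c4, ← mul_assoc, ← Q.quasiCoassoc a, mul_assoc]
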